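/- Let ι be an infinite set, U a nonprincipal ultrafilter on ι, (K_i)_{i∈ι} a family of fields, and n ∈ ℕ. Let P := ∏_i K_i and Q := ∏_i K_i[[X_1, …, X_n]] (products of fields and of multivariate formal power series rings), and let I_U ⊆ P and J_U ⊆ Q be the ideals of families f with {i : f i = 0} ∈ U; write [·] for residue classes. Then there exists a surjective ring homomorphism π : Q/J_U → (P/I_U)[[X_1, …, X_n]] such that: (a) π([(C(a_i))_i]) = C([a]) for every a = (a_i)_i ∈ P, where C denotes the constant power series map; (b) π([(X_j)_i]) = X_j for each j; and (c) the kernel of π equals the intersection ⋂_{d∈ℕ} 𝔛^d, where 𝔛 is the ideal of Q/J_U generated by the classes of the constant families X_1, …, X_n. -/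

import Mathlib

open MvPowerSeries Finsupp

def ultraIdeal {ι : Type*} (R : ι → Type*) [∀ i, CommRing (R i)] (U : Ultrafilter ι) :
    Ideal (∀ i, R i) where
  carrier := {f | {i | f i = 0} ∈ U}
  zero_mem' := Filter.univ_mem' (fun i => rfl)
  add_mem' := by
    intro f g hf hg
    refine U.toFilter.mem_of_superset (Filter.inter_mem hf hg) ?_
    rintro i ⟨hfi, hgi⟩
    simp only [Set.mem_setOf_eq] at *
    rw [Pi.add_apply, hfi, hgi, add_zero]
  smul_mem' := by
    intro c f hf
    refine U.toFilter.mem_of_superset hf ?_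
    intro i hfi
    simp only [Set.mem_setOf_eq] at *
    rw [smul_eq_mul, Pi.mul_apply, hfi, mul_zero]


lemma degAdd {σ : Type*} (a b : σ →₀ ℕ) : (a + b).degree = a.degree + b.degree := by
  simp [Finsupp.degree_eq_weight_one, map_add]

lemma degMono {σ : Type*} {a b : σ →₀ ℕ} (h : a ≤ b) : a.degree ≤ b.degree := by
  have : a + (b - a) = b := by
    ext j; simp [Nat.add_sub_cancel' (h j)]
  calc a.degree ≤ a.degree + (b - a).degree := Nat.le_add_right _ _
    _ = b.degree := by rw [← degAdd, this]

lemma degSingle {σ : Type*} (j : σ) (k : ℕ) : (Finsupp.single j k).degree = k := by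
  simp [Finsupp.degree_eq_weight_one, Finsupp.weight_apply, Finsupp.sum_single_index]

lemma exists_sel {σ : Type*} (d : ℕ) : ∀ (e : σ →₀ ℕ), d ≤ e.degree →
    ∃ s, s ≤ e ∧ s.degree = d := by
  induction d with
  | zero => intro e _; exact ⟨0, zero_le, map_zero _⟩
  | succ d ih =>
    intro e he
    have hne : e ≠ 0 := by
      rintro rfl; simp [map_zero] at he
    obtain ⟨j, hj⟩ : ∃ j, e j ≠ 0 := by
      by_contra h; push_neg at h; exact hne (Finsupp.ext fun j => h j)
    have hsub : Finsupp.single j 1 ≤ e := by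
      intro k
      rcases eq_or_ne k j with rfl | hk
      · simpa [Finsupp.single_apply] using Nat.one_le_iff_ne_zero.mpr hj
      · simp [Finsupp.single_apply, Ne.symm hk]
    have hsum : (e - Finsupp.single j 1) + Finsupp.single j 1 = e := by
      ext k; simp [Nat.sub_add_cancel (hsub k)]
    have hd : d ≤ (e - Finsupp.single j 1).degree := by
      have : (e - Finsupp.single j 1).degree + 1 = e.degree := by
        conv_rhs => rw [← hsum]
        rw [degAdd, degSingle]
      omega
    obtain ⟨s, hs1, hs2⟩ := ih _ hd
    refine ⟨s + Finsupp.single j 1, ?_, by rw [degAdd, hs2, degSingle]⟩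
    intro k
    have h1 := hs1 k
    have h2 := hsub k
    simp only [Finsupp.coe_add, Pi.add_apply, Finsupp.coe_tsub, Pi.sub_apply] at h1 ⊢
    omega

lemma constCoeff_zero_of_mem_spanX {σ R : Type*} [CommRing R] {F : MvPowerSeries σ R}
    (hF : F ∈ Ideal.span (Set.range (MvPowerSeries.X (R := R) (σ := σ)))) :
    MvPowerSeries.coeff 0 F = 0 := by
  have : Ideal.span (Set.range (MvPowerSeries.X (R := R) (σ := σ))) ≤
      RingHom.ker (MvPowerSeries.constantCoeff (σ := σ) (R := R)) := by
    rw [Ideal.span_le]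
    rintro _ ⟨j, rfl⟩
    simpa [RingHom.mem_ker] using MvPowerSeries.constantCoeff_X (R := R) j
  simpa [RingHom.mem_ker, MvPowerSeries.coeff_zero_eq_constantCoeff] using this hF

lemma coeff_zero_of_mem_spanX_pow {σ R : Type*} [CommRing R] :
    ∀ (d : ℕ) (F : MvPowerSeries σ R),
    F ∈ (Ideal.span (Set.range (MvPowerSeries.X (R := R) (σ := σ)))) ^ d →
    ∀ e : σ →₀ ℕ, e.degree < d → MvPowerSeries.coeff e F = 0 := by
  classical
  intro d
  induction d with
  | zero => intro F _ e he; omega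
  | succ d ih =>
    intro F hF
    rw [pow_succ] at hF
    refine Submodule.mul_induction_on hF ?_ ?_
    · intro a ha b hb e he
      rw [MvPowerSeries.coeff_mul]
      refine Finset.sum_eq_zero fun p hp => ?_
      rw [Finset.HasAntidiagonal.mem_antidiagonal] at hp
      by_cases h1 : p.1.degree < d
      · rw [ih a ha p.1 h1, zero_mul]
      · have hdeg : p.1.degree + p.2.degree = e.degree := by rw [← degAdd, hp]
        have : p.2.degree = 0 := by omega
        have hp2 : p.2 = 0 := (Finsupp.degree_eq_zero_iff _).mp this
        rw [hp2, constCoeff_zero_of_mem_spanX hb, mul_zero]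
    · intro x y hx hy e he
      rw [map_add, hx e he, hy e he, add_zero]

noncomputable def selFn {σ : Type*} (d : ℕ) (e : σ →₀ ℕ) : σ →₀ ℕ :=
  if h : d ≤ e.degree then (exists_sel d e h).choose else 0

lemma selFn_le {σ : Type*} {d : ℕ} {e : σ →₀ ℕ} (h : d ≤ e.degree) : selFn d e ≤ e := by
  rw [selFn, dif_pos h]; exact (exists_sel d e h).choose_spec.1

lemma selFn_degree {σ : Type*} {d : ℕ} {e : σ →₀ ℕ} (h : d ≤ e.degree) :
    (selFn d e).degree = d := by
  rw [selFn, dif_pos h]; exact (exists_sel d e h).choose_spec.2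

noncomputable def SS (σ : Type*) [Finite σ] (d : ℕ) : Finset (σ →₀ ℕ) :=
  (Finsupp.finite_of_degree_le (σ := σ) d).toFinset.filter (fun s => s.degree = d)

lemma mem_SS {σ : Type*} [Finite σ] {d : ℕ} {s : σ →₀ ℕ} : s ∈ SS σ d ↔ s.degree = d := by
  simp only [SS, Finset.mem_filter, Set.Finite.mem_toFinset, Set.mem_setOf_eq,
    and_iff_right_iff_imp]
  omega

open scoped Classical in
noncomputable def Hcoef {σ R : Type*} [CommRing R] (d : ℕ) (s : σ →₀ ℕ)
    (F : MvPowerSeries σ R) : MvPowerSeries σ R :=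
  fun t => if selFn d (t + s) = s then MvPowerSeries.coeff (t + s) F else 0

lemma coeff_Hcoef {σ R : Type*} [CommRing R] (d : ℕ) (s t : σ →₀ ℕ)
    (F : MvPowerSeries σ R) [Decidable (selFn d (t + s) = s)] :
    MvPowerSeries.coeff t (Hcoef d s F) =
      if selFn d (t + s) = s then MvPowerSeries.coeff (t + s) F else 0 := by
  rw [MvPowerSeries.coeff_apply, Hcoef]
  congr

lemma repr_eq {σ R : Type*} [Finite σ] [CommRing R] (d : ℕ) (F : MvPowerSeries σ R)
    (hF : ∀ e : σ →₀ ℕ, e.degree < d → MvPowerSeries.coeff e F = 0) :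
    F = ∑ s ∈ SS σ d, Hcoef d s F * MvPowerSeries.monomial (R := R) s 1 := by
  classical
  ext e
  rw [map_sum]
  simp_rw [MvPowerSeries.coeff_mul_monomial, mul_one]
  by_cases hde : d ≤ e.degree
  · rw [Finset.sum_eq_single (selFn d e)]
    · rw [if_pos (selFn_le hde), coeff_Hcoef,
        tsub_add_cancel_of_le (selFn_le hde), if_pos rfl]
    · intro s hs hne
      by_cases hle : s ≤ e
      · rw [if_pos hle, coeff_Hcoef, tsub_add_cancel_of_le hle, if_neg (by
          intro h; exact hne h.symm)]
      · rw [if_neg hle]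
    · intro h
      exact absurd (mem_SS.mpr (selFn_degree hde)) h
  · rw [hF e (by omega)]
    refine (Finset.sum_eq_zero fun s hs => ?_).symm
    rw [if_neg]
    intro hle
    have := degMono hle
    rw [mem_SS.mp hs] at this
    omega

lemma mem_ultraIdeal {ι : Type*} {R : ι → Type*} [∀ i, CommRing (R i)] {U : Ultrafilter ι}
    {f : ∀ i, R i} : f ∈ ultraIdeal R U ↔ {i | f i = 0} ∈ U := Iff.rfl

noncomputable def prodCoeffHom {ι : Type*} (R : ι → Type*) [∀ i, CommRing (R i)]
    (U : Ultrafilter ι) (n : ℕ) :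
    (∀ i, MvPowerSeries (Fin n) (R i)) →+*
      MvPowerSeries (Fin n) ((∀ i, R i) ⧸ ultraIdeal R U) where
  toFun f := fun e => Ideal.Quotient.mk (ultraIdeal R U)
    (fun i => MvPowerSeries.coeff e (f i))
  map_one' := by
    classical
    apply MvPowerSeries.ext; intro e
    rw [MvPowerSeries.coeff_one]
    show Ideal.Quotient.mk _ (fun i => MvPowerSeries.coeff e
      ((1 : ∀ i, MvPowerSeries (Fin n) (R i)) i)) = _
    simp only [Pi.one_apply, MvPowerSeries.coeff_one]
    split_ifs with h
    · exact map_one _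
    · exact map_zero _
  map_zero' := by
    apply MvPowerSeries.ext; intro e
    rw [MvPowerSeries.coeff_apply]
    simp only [Pi.zero_apply, map_zero]
    rfl
  map_add' f g := by
    apply MvPowerSeries.ext; intro e
    show Ideal.Quotient.mk _ (fun i => MvPowerSeries.coeff e ((f + g) i)) =
      Ideal.Quotient.mk (ultraIdeal R U) (fun i => MvPowerSeries.coeff e (f i)) +
        Ideal.Quotient.mk (ultraIdeal R U) (fun i => MvPowerSeries.coeff e (g i))
    rw [← map_add]
    congr 1
  map_mul' f g := by
    classical
    apply MvPowerSeries.ext; intro e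
    show Ideal.Quotient.mk _ (fun i => MvPowerSeries.coeff e ((f * g) i)) =
      MvPowerSeries.coeff e
        ((show MvPowerSeries (Fin n) ((∀ i, R i) ⧸ ultraIdeal R U) from fun e =>
          Ideal.Quotient.mk (ultraIdeal R U) (fun i => MvPowerSeries.coeff e (f i))) *
        (show MvPowerSeries (Fin n) ((∀ i, R i) ⧸ ultraIdeal R U) from fun e =>
          Ideal.Quotient.mk (ultraIdeal R U) (fun i => MvPowerSeries.coeff e (g i))))
    rw [MvPowerSeries.coeff_mul]
    have h1 : (fun i => MvPowerSeries.coeff e ((f * g) i)) =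
        ∑ p ∈ Finset.HasAntidiagonal.antidiagonal e, fun i =>
          MvPowerSeries.coeff p.1 (f i) * MvPowerSeries.coeff p.2 (g i) := by
      funext i
      rw [Finset.sum_apply]
      exact MvPowerSeries.coeff_mul e (f i) (g i)
    rw [h1, map_sum]
    refine Finset.sum_congr rfl fun p _ => ?_
    show _ = Ideal.Quotient.mk (ultraIdeal R U) _ * Ideal.Quotient.mk (ultraIdeal R U) _
    rw [← map_mul]
    rfl

lemma coeff_prodCoeffHom {ι : Type*} (R : ι → Type*) [∀ i, CommRing (R i)]
    (U : Ultrafilter ι) (n : ℕ) (f : ∀ i, MvPowerSeries (Fin n) (R i)) (e : Fin n →₀ ℕ) :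
    MvPowerSeries.coeff e (prodCoeffHom R U n f) =
      Ideal.Quotient.mk (ultraIdeal R U) (fun i => MvPowerSeries.coeff e (f i)) := rfl

set_option synthInstance.maxHeartbeats 1000000 in
lemma mk_monomial_mem {ι : Type*} (R : ι → Type*) [∀ i, CommRing (R i)] (U : Ultrafilter ι)
    (n : ℕ) (s : Fin n →₀ ℕ) :
    Ideal.Quotient.mk (ultraIdeal (fun i => MvPowerSeries (Fin n) (R i)) U)
      (fun i => MvPowerSeries.monomial (R := R i) s 1) ∈
    (Ideal.span (Set.range fun j : Fin n =>
      Ideal.Quotient.mk (ultraIdeal (fun i => MvPowerSeries (Fin n) (R i)) U)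
        (fun i => (MvPowerSeries.X j : MvPowerSeries (Fin n) (R i))))) ^ s.degree := by
  induction s using Finsupp.induction with
  | zero =>
    rw [map_zero, Submodule.pow_zero, Ideal.one_eq_top]
    exact Submodule.mem_top
  | single_add j k t hjt hk ih =>
    have hdeg : (Finsupp.single j k + t).degree = k + t.degree := by
      rw [degAdd, degSingle]
    have hsplit : (fun i => MvPowerSeries.monomial (R := R i) (Finsupp.single j k + t) 1) =
        ((fun i => (MvPowerSeries.X j : MvPowerSeries (Fin n) (R i))) ^ k) *
        (fun i => MvPowerSeries.monomial (R := R i) t 1) := by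
      funext i
      show MvPowerSeries.monomial (R := R i) (Finsupp.single j k + t) 1 =
        (MvPowerSeries.X j : MvPowerSeries (Fin n) (R i)) ^ k *
          MvPowerSeries.monomial (R := R i) t 1
      rw [MvPowerSeries.X_pow_eq, MvPowerSeries.monomial_mul_monomial, one_mul]
    have hXj : Ideal.Quotient.mk (ultraIdeal (fun i => MvPowerSeries (Fin n) (R i)) U)
        (fun i => (MvPowerSeries.X j : MvPowerSeries (Fin n) (R i))) ∈
        Ideal.span (Set.range fun j : Fin n =>
          Ideal.Quotient.mk (ultraIdeal (fun i => MvPowerSeries (Fin n) (R i)) U)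
            (fun i => (MvPowerSeries.X j : MvPowerSeries (Fin n) (R i)))) :=
      Ideal.subset_span ⟨j, rfl⟩
    rw [hdeg, hsplit, map_mul, map_pow, Ideal.IsTwoSided.pow_add]
    exact Ideal.mul_mem_mul (Ideal.pow_mem_pow hXj k) ih

set_option maxHeartbeats 2000000 in
set_option synthInstance.maxHeartbeats 1000000 in
theorem stmt8 {ι : Type} [Infinite ι] (U : Ultrafilter ι)
    (hU : ∀ s : Set ι, s.Finite → s ∉ U)
    (K : ι → Type) [∀ i, Field (K i)] (n : ℕ) :
    letI P := ∀ i, K i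
    letI Q := ∀ i, MvPowerSeries (Fin n) (K i)
    letI IU := ultraIdeal K U
    letI JU := ultraIdeal (fun i => MvPowerSeries (Fin n) (K i)) U
    letI 𝔛 : Ideal (Q ⧸ JU) := Ideal.span
      (Set.range fun j : Fin n =>
        Ideal.Quotient.mk JU (fun i => (MvPowerSeries.X j : MvPowerSeries (Fin n) (K i))))
    ∃ π : (Q ⧸ JU) →+* MvPowerSeries (Fin n) (P ⧸ IU),
      Function.Surjective π ∧
      (∀ a : P, π (Ideal.Quotient.mk JU (fun i => MvPowerSeries.C (σ := Fin n) (R := K i) (a i))) =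
        MvPowerSeries.C (σ := Fin n) (R := P ⧸ IU) (Ideal.Quotient.mk IU a)) ∧
      (∀ j : Fin n, π (Ideal.Quotient.mk JU
          (fun i => (MvPowerSeries.X j : MvPowerSeries (Fin n) (K i)))) =
        MvPowerSeries.X j) ∧
      RingHom.ker π = ⨅ d : ℕ, 𝔛 ^ d := by
  classical
  set IU := ultraIdeal K U with hIU
  set JU := ultraIdeal (fun i => MvPowerSeries (Fin n) (K i)) U with hJU
  set 𝔛 : Ideal ((∀ i, MvPowerSeries (Fin n) (K i)) ⧸ JU) := Ideal.span
    (Set.range fun j : Fin n =>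
      Ideal.Quotient.mk JU (fun i => (MvPowerSeries.X j : MvPowerSeries (Fin n) (K i))))
    with h𝔛
  set Φ := prodCoeffHom K U n with hΦ
  have hJUker : ∀ f ∈ JU, Φ f = 0 := by
    intro f hf
    apply MvPowerSeries.ext; intro e
    rw [coeff_prodCoeffHom, map_zero, Ideal.Quotient.eq_zero_iff_mem]
    refine U.toFilter.mem_of_superset hf fun i hi => ?_
    simp only [Set.mem_setOf_eq] at hi ⊢
    rw [hi, map_zero]
  refine ⟨Ideal.Quotient.lift JU Φ hJUker, ?_, ?_, ?_, ?_⟩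
  · -- surjectivity
    intro F
    have hrep : ∀ e : Fin n →₀ ℕ, ∃ a : ∀ i, K i, Ideal.Quotient.mk IU a =
        MvPowerSeries.coeff (R := (∀ i, K i) ⧸ IU) e F := fun e => Ideal.Quotient.mk_surjective _
    choose rep hrep using hrep
    refine ⟨Ideal.Quotient.mk JU (show ∀ i, MvPowerSeries (Fin n) (K i) from fun i => fun e => rep e i), ?_⟩
    rw [Ideal.Quotient.lift_mk]
    apply MvPowerSeries.ext; intro e
    rw [coeff_prodCoeffHom]
    exact hrep e
  · -- property (a)
    intro a
    rw [Ideal.Quotient.lift_mk]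
    apply MvPowerSeries.ext; intro e
    rw [coeff_prodCoeffHom, MvPowerSeries.coeff_C]
    simp only [MvPowerSeries.coeff_C]
    split_ifs with h
    · rfl
    · exact map_zero _
  · -- property (b)
    intro j
    rw [Ideal.Quotient.lift_mk]
    apply MvPowerSeries.ext; intro e
    rw [coeff_prodCoeffHom, MvPowerSeries.coeff_X]
    simp only [MvPowerSeries.coeff_X]
    split_ifs with h
    · exact map_one _
    · exact map_zero _
  · -- kernel
    have hb : ∀ j : Fin n, Ideal.Quotient.lift JU Φ hJUker (Ideal.Quotient.mk JU
        (fun i => (MvPowerSeries.X j : MvPowerSeries (Fin n) (K i)))) =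
        (MvPowerSeries.X j : MvPowerSeries (Fin n) ((∀ i, K i) ⧸ IU)) := by
      intro j
      rw [Ideal.Quotient.lift_mk]
      apply MvPowerSeries.ext; intro e
      rw [coeff_prodCoeffHom, MvPowerSeries.coeff_X]
      simp only [MvPowerSeries.coeff_X]
      split_ifs with h
      · exact map_one _
      · exact map_zero _
    ext x
    rw [RingHom.mem_ker, Submodule.mem_iInf]
    constructor
    · -- ker ≤ ⋂
      intro hx d
      obtain ⟨f, rfl⟩ := Ideal.Quotient.mk_surjective x
      rw [Ideal.Quotient.lift_mk] at hx
      have hcoeff : ∀ e : Fin n →₀ ℕ, {i | MvPowerSeries.coeff e (f i) = 0} ∈ U := by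
        intro e
        have := congrArg (MvPowerSeries.coeff (R := (∀ i, K i) ⧸ IU) e) hx
        rw [coeff_prodCoeffHom, map_zero] at this
        exact Ideal.Quotient.eq_zero_iff_mem.mp this
      set E := (Finsupp.finite_of_degree_le (σ := Fin n) d).toFinset with hE
      set A := {i | ∀ e ∈ E, MvPowerSeries.coeff e (f i) = 0} with hA
      have hAU : A ∈ U := by
        have : A = ⋂ e ∈ E, {i | MvPowerSeries.coeff e (f i) = 0} := by
          ext i; simp [hA]
        rw [this]
        exact (Filter.biInter_finset_mem E).mpr fun e _ => hcoeff e
      set g : ∀ i, MvPowerSeries (Fin n) (K i) := fun i => if i ∈ A then f i else 0 with hg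
      have hgf : Ideal.Quotient.mk JU g = Ideal.Quotient.mk JU f := by
        rw [Ideal.Quotient.eq]
        refine U.toFilter.mem_of_superset hAU fun i hi => ?_
        simp only [Set.mem_setOf_eq, Pi.sub_apply, hg]
        rw [if_pos hi, sub_self]
      have hgcoeff : ∀ i, ∀ e : Fin n →₀ ℕ, e.degree < d →
          MvPowerSeries.coeff e (g i) = 0 := by
        intro i e he
        by_cases hi : i ∈ A
        · have hgi : g i = f i := by simp [hg, hi]
          rw [hgi]
          exact hi e (by simp [hE]; omega)
        · have hgi : g i = 0 := by simp [hg, hi]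
          rw [hgi, map_zero]
      have hrepr : g = ∑ s ∈ SS (Fin n) d,
          (fun i => Hcoef d s (g i)) * (fun i => MvPowerSeries.monomial (R := K i) s 1) := by
        funext i
        rw [Finset.sum_apply]
        simp only [Pi.mul_apply]
        exact repr_eq d (g i) (hgcoeff i)
      rw [← hgf, hrepr, map_sum]
      refine Ideal.sum_mem _ fun s hs => ?_
      rw [map_mul]
      refine Ideal.mul_mem_left _ _ ?_
      have := mk_monomial_mem K U n s
      rwa [mem_SS.mp hs] at this
    · -- ⋂ ≤ ker
      intro hx
      have hmap : Ideal.map (Ideal.Quotient.lift JU Φ hJUker) 𝔛 ≤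
          Ideal.span (Set.range (MvPowerSeries.X (σ := Fin n) (R := (∀ i, K i) ⧸ IU))) := by
        rw [Ideal.map_span, ← Set.range_comp]
        refine Ideal.span_le.mpr ?_
        rintro _ ⟨j, rfl⟩
        have : (Ideal.Quotient.lift JU Φ hJUker ∘ fun j : Fin n => Ideal.Quotient.mk JU
            (fun i => (MvPowerSeries.X j : MvPowerSeries (Fin n) (K i)))) j =
            (MvPowerSeries.X j : MvPowerSeries (Fin n) ((∀ i, K i) ⧸ IU)) := hb j
        rw [this]
        exact Ideal.subset_span ⟨j, rfl⟩
      apply MvPowerSeries.ext; intro e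
      rw [map_zero]
      have hmem : Ideal.Quotient.lift JU Φ hJUker x ∈
          (Ideal.span (Set.range (MvPowerSeries.X (σ := Fin n) (R := (∀ i, K i) ⧸ IU)))) ^
            (e.degree + 1) := by
        have h1 : Ideal.Quotient.lift JU Φ hJUker x ∈
            Ideal.map (Ideal.Quotient.lift JU Φ hJUker) (𝔛 ^ (e.degree + 1)) :=
          Ideal.mem_map_of_mem _ (hx (e.degree + 1))
        rw [Ideal.map_pow] at h1
        exact Ideal.pow_right_mono hmap (e.degree + 1) h1
      exact coeff_zero_of_mem_spanX_pow (e.degree + 1) _ hmem e (by omega)
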